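/- Let ξ₂ be a real number with |ξ₂| ≥ 2. Then the set of real ξ satisfying |1 + 4/(3ξ(ξ-ξ₂)ξ₂²)| ≤ 1/2 (with ξ(ξ-ξ₂) ≠ 0) has Lebesgue measure at most C·|ξ₂|^{-2} for an absolute constant C. -/
import Mathlib


theorem xi_measure_bound :
    ∃ C > 0, ∀ ξ₂ : ℝ, 2 ≤ |ξ₂| →
      MeasureTheory.volume
          {ξ : ℝ | ξ * (ξ - ξ₂) ≠ 0 ∧ |1 + 4 / (3 * ξ * (ξ - ξ₂) * ξ₂ ^ 2)| ≤ 1 / 2} ≤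
        ENNReal.ofReal (C / ξ₂ ^ 2) := by
  refine ⟨8, by norm_num, fun ξ₂ hξ₂ => ?_⟩
  have ht4 : (4:ℝ) ≤ ξ₂ ^ 2 := by nlinarith [sq_abs ξ₂]
  have htpos : (0:ℝ) < ξ₂ ^ 2 := by linarith
  set t := ξ₂ ^ 2 with htdef
  set a := t / 4 - 8 / (3 * t) with hadef
  set b := t / 4 - 8 / (9 * t) with hbdef
  clear_value t a b
  have h83 : 8 / (3 * t) ≤ 2 / 3 := by
    rw [div_le_div_iff₀ (by positivity) (by norm_num)]; linarith
  have ha13 : (1:ℝ) / 3 ≤ a := by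
    have h14 : (1:ℝ) ≤ t / 4 := by linarith
    simp only [hadef]; linarith
  have ha0 : (0:ℝ) ≤ a := le_trans (by norm_num) ha13
  have hab : a ≤ b := by
    have : 8 / (9 * t) ≤ 8 / (3 * t) := by
      rw [div_le_div_iff₀ (by positivity) (by positivity)]; nlinarith
    simp only [hadef, hbdef]; linarith
  have hba : b - a = 16 / (9 * t) := by
    simp only [hadef, hbdef]; field_simp; ring
  have hsqa : (1:ℝ) / 2 ≤ Real.sqrt a := by
    have h := Real.sqrt_le_sqrt (show ((1:ℝ)/2) ^ 2 ≤ a by nlinarith)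
    rwa [Real.sqrt_sq (by norm_num)] at h
  have hsq : Real.sqrt a ^ 2 = a := Real.sq_sqrt ha0
  have h16 : 16 / (9 * t) ≤ 4 / t := by
    rw [div_le_div_iff₀ (by positivity) htpos]; linarith
  have hc : (0:ℝ) < 4 / t := by positivity
  have hble : b ≤ (Real.sqrt a + 4 / t) ^ 2 := by
    have hmul : (4 / t) * (1 / 2) ≤ (4 / t) * Real.sqrt a :=
      mul_le_mul_of_nonneg_left hsqa (le_of_lt hc)
    have hb4 : b ≤ a + 4 / t := by linarith
    nlinarith [hsq, hmul, hb4, sq_nonneg (4 / t)]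
  have hsqb : Real.sqrt b ≤ Real.sqrt a + 4 / t := by
    have h := Real.sqrt_le_sqrt hble
    rwa [Real.sqrt_sq (by positivity)] at h
  have hsba : (0:ℝ) ≤ Real.sqrt b - Real.sqrt a :=
    sub_nonneg.2 (Real.sqrt_le_sqrt hab)
  have hsub : {ξ : ℝ | ξ * (ξ - ξ₂) ≠ 0 ∧ |1 + 4 / (3 * ξ * (ξ - ξ₂) * t)| ≤ 1 / 2} ⊆
      Set.Icc (ξ₂ / 2 - Real.sqrt b) (ξ₂ / 2 - Real.sqrt a) ∪
        Set.Icc (ξ₂ / 2 + Real.sqrt a) (ξ₂ / 2 + Real.sqrt b) := by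
    rintro ξ ⟨hq0, habs⟩
    set q := ξ * (ξ - ξ₂) with hqdef
    have hDeq : 3 * ξ * (ξ - ξ₂) * t = 3 * q * t := by rw [hqdef]; ring
    rw [hDeq] at habs
    obtain ⟨h1, h2⟩ := abs_le.1 habs
    have hDne : 3 * q * t ≠ 0 :=
      mul_ne_zero (mul_ne_zero three_ne_zero hq0) (ne_of_gt htpos)
    have hDneg : 3 * q * t < 0 := by
      rcases hDne.lt_or_gt with h | h
      · exact h
      · exfalso
        have := div_pos (show (0:ℝ) < 4 by norm_num) h
        linarith
    have h4 : (-3/2 : ℝ) ≤ 4 / (3 * q * t) := by linarith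
    rw [le_div_iff_of_neg hDneg] at h4
    have h5 : 4 / (3 * q * t) ≤ -1/2 := by linarith
    rw [div_le_iff_of_neg hDneg] at h5
    have hq_lb : -8 / (3 * t) ≤ q := by
      rw [div_le_iff₀ (by positivity : (0:ℝ) < 3 * t)]; linarith
    have hq_ub : q ≤ -8 / (9 * t) := by
      rw [le_div_iff₀ (by positivity : (0:ℝ) < 9 * t)]; linarith
    have hu : (ξ - ξ₂ / 2) ^ 2 = q + t / 4 := by rw [hqdef, htdef]; ring
    have habq : a ≤ (ξ - ξ₂ / 2) ^ 2 := by
      rw [hu]; simp only [hadef]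
      have : -(8 / (3 * t)) = -8 / (3 * t) := by ring
      linarith [hq_lb]
    have hbq : (ξ - ξ₂ / 2) ^ 2 ≤ b := by
      rw [hu]; simp only [hbdef]
      have : -(8 / (9 * t)) = -8 / (9 * t) := by ring
      linarith [hq_ub]
    have h1' : Real.sqrt a ≤ |ξ - ξ₂ / 2| := by
      rw [← Real.sqrt_sq_eq_abs]; exact Real.sqrt_le_sqrt habq
    have h2' : |ξ - ξ₂ / 2| ≤ Real.sqrt b := by
      rw [← Real.sqrt_sq_eq_abs]; exact Real.sqrt_le_sqrt hbq
    rcases le_or_gt 0 (ξ - ξ₂ / 2) with h | h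
    · right
      rw [abs_of_nonneg h] at h1' h2'
      exact ⟨by linarith, by linarith⟩
    · left
      rw [abs_of_neg h] at h1' h2'
      exact ⟨by linarith, by linarith⟩
  calc MeasureTheory.volume
        {ξ : ℝ | ξ * (ξ - ξ₂) ≠ 0 ∧ |1 + 4 / (3 * ξ * (ξ - ξ₂) * t)| ≤ 1 / 2}
      ≤ MeasureTheory.volume
          (Set.Icc (ξ₂ / 2 - Real.sqrt b) (ξ₂ / 2 - Real.sqrt a) ∪
            Set.Icc (ξ₂ / 2 + Real.sqrt a) (ξ₂ / 2 + Real.sqrt b)) :=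
        MeasureTheory.measure_mono hsub
    _ ≤ MeasureTheory.volume (Set.Icc (ξ₂ / 2 - Real.sqrt b) (ξ₂ / 2 - Real.sqrt a)) +
          MeasureTheory.volume (Set.Icc (ξ₂ / 2 + Real.sqrt a) (ξ₂ / 2 + Real.sqrt b)) :=
        MeasureTheory.measure_union_le _ _
    _ = ENNReal.ofReal (Real.sqrt b - Real.sqrt a) +
          ENNReal.ofReal (Real.sqrt b - Real.sqrt a) := by
        rw [Real.volume_Icc, Real.volume_Icc]
        congr 1 <;> ring_nf
    _ = ENNReal.ofReal ((Real.sqrt b - Real.sqrt a) + (Real.sqrt b - Real.sqrt a)) :=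
        (ENNReal.ofReal_add hsba hsba).symm
    _ ≤ ENNReal.ofReal (8 / t) := by
        apply ENNReal.ofReal_le_ofReal
        have : 8 / t = 2 * (4 / t) := by ring
        linarith [hsqb]
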